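/- Let (X, 𝒪_n) and (Y, 𝒪'_n) be operator spaces and let φ : X → Y be a linear map. Then the 𝒲-completely bounded norm of φ regarded as a map from (X, 𝒲_max) to (Y, 𝒲_max) equals the completely bounded norm 𝒪(φ)_cb (as an equality in [0, ∞]). -/

import Mathlib

open scoped ComplexOrder Matrix ENNReal TensorProduct

universe u v

noncomputable section

/-- The block-diagonal sum `x ⊕ y` of two square matrices. -/
def blockDiag {X : Type*} [Zero X] {m n : ℕ} (x : Matrix (Fin m) (Fin m) X)
    (y : Matrix (Fin n) (Fin n) X) : Matrix (Fin (m + n)) (Fin (m + n)) X :=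
  Matrix.submatrix (Matrix.fromBlocks x 0 0 y) finSumFinEquiv.symm finSumFinEquiv.symm

/-- The block matrix `[[0, x], [0, 0]]` with `x` in the upper-right corner. -/
def cornerBlock {X : Type*} [Zero X] {n : ℕ} (x : Matrix (Fin n) (Fin n) X) :
    Matrix (Fin (n + n)) (Fin (n + n)) X :=
  Matrix.submatrix (Matrix.fromBlocks 0 x 0 0) finSumFinEquiv.symm finSumFinEquiv.symm

/-- Multiplication `α x` of a scalar matrix with a matrix over a ℂ-module. -/
def scalarMulLeft {X : Type*} [AddCommMonoid X] [Module ℂ X] {m n k : ℕ}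
    (α : Matrix (Fin m) (Fin n) ℂ) (x : Matrix (Fin n) (Fin k) X) :
    Matrix (Fin m) (Fin k) X :=
  Matrix.of fun i j => ∑ l, α i l • x l j

/-- Multiplication `x β` of a matrix over a ℂ-module with a scalar matrix. -/
def scalarMulRight {X : Type*} [AddCommMonoid X] [Module ℂ X] {m n k : ℕ}
    (x : Matrix (Fin m) (Fin n) X) (β : Matrix (Fin n) (Fin k) ℂ) :
    Matrix (Fin m) (Fin k) X :=
  Matrix.of fun i j => ∑ l, β l j • x i l

/-- Operator norm of a rectangular complex matrix, as an operator ℓ²(Fin n) → ℓ²(Fin m). -/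
def matOpNorm {m n : ℕ} (α : Matrix (Fin m) (Fin n) ℂ) : ℝ :=
  ‖LinearMap.toContinuousLinearMap (Matrix.toEuclideanLin α)‖

/-- The numerical radius of a bounded operator on a complex inner product space. -/
def numRadius {H : Type*} [NormedAddCommGroup H] [InnerProductSpace ℂ H]
    (a : H →L[ℂ] H) : ℝ :=
  ⨆ ξ : {ξ : H // ‖ξ‖ ≤ 1}, ‖(inner ℂ (ξ : H) (a ξ) : ℂ)‖

/-- The bounded operator `Hⁿ → Hᵐ` induced by an `m × n` matrix of bounded operators,
where `Hⁿ` carries the ℓ²-direct sum structure. -/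
def matOpRect {H : Type*} [NormedAddCommGroup H] [InnerProductSpace ℂ H] {m n : ℕ}
    (a : Matrix (Fin m) (Fin n) (H →L[ℂ] H)) :
    (PiLp 2 fun _ : Fin n => H) →L[ℂ] (PiLp 2 fun _ : Fin m => H) :=
  ((PiLp.continuousLinearEquiv 2 ℂ (fun _ : Fin m => H)).symm.toContinuousLinearMap) ∘L
    (ContinuousLinearMap.pi fun i => ∑ j, (a i j).comp (ContinuousLinearMap.proj j)) ∘L
    ((PiLp.continuousLinearEquiv 2 ℂ (fun _ : Fin n => H)).toContinuousLinearMap)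

/-- The bounded operator on `Hⁿ` induced by an `n × n` matrix of bounded operators. -/
def matOp {H : Type*} [NormedAddCommGroup H] [InnerProductSpace ℂ H] {n : ℕ}
    (a : Matrix (Fin n) (Fin n) (H →L[ℂ] H)) :
    (PiLp 2 fun _ : Fin n => H) →L[ℂ] (PiLp 2 fun _ : Fin n => H) :=
  matOpRect a

/-- The numerical radius of a complex `n × n` matrix, acting on `ℂⁿ`. -/
def matNumRadius {n : ℕ} (a : Matrix (Fin n) (Fin n) ℂ) : ℝ :=
  numRadius (LinearMap.toContinuousLinearMap (Matrix.toEuclideanLin a))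

/-- The identification of `M_k(M_n(ℂ))` with `M_{kn}(ℂ)`. -/
def flatten {k n : ℕ} (x : Matrix (Fin k) (Fin k) (Matrix (Fin n) (Fin n) ℂ)) :
    Matrix (Fin (k * n)) (Fin (k * n)) ℂ :=
  Matrix.of fun i j =>
    x (finProdFinEquiv.symm i).1 (finProdFinEquiv.symm j).1
      (finProdFinEquiv.symm i).2 (finProdFinEquiv.symm j).2

/-- An (abstract) numerical radius operator space: a complex vector space `X` together with a
norm `W n` on each matrix space `M_n(X)` satisfying the conditions (WI) and (WII). -/
structure NRNorm (X : Type u) [AddCommGroup X] [Module ℂ X] where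
  W : ∀ n : ℕ, Matrix (Fin n) (Fin n) X → ℝ
  nonneg : ∀ (n : ℕ) (x : Matrix (Fin n) (Fin n) X), 0 ≤ W n x
  eq_zero_iff : ∀ (n : ℕ) (x : Matrix (Fin n) (Fin n) X), W n x = 0 ↔ x = 0
  add_le : ∀ (n : ℕ) (x y : Matrix (Fin n) (Fin n) X), W n (x + y) ≤ W n x + W n y
  smul_eq : ∀ (n : ℕ) (c : ℂ) (x : Matrix (Fin n) (Fin n) X), W n (c • x) = ‖c‖ * W n x
  cond_WI : ∀ (m n : ℕ) (x : Matrix (Fin m) (Fin m) X) (y : Matrix (Fin n) (Fin n) X),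
    W (m + n) (blockDiag x y) = max (W m x) (W n y)
  cond_WII : ∀ (m n : ℕ) (α : Matrix (Fin n) (Fin m) ℂ) (x : Matrix (Fin m) (Fin m) X),
    W n (scalarMulRight (scalarMulLeft α x) αᴴ) ≤ matOpNorm α ^ 2 * W m x

/-- An (abstract) operator space: a complex vector space `X` together with a norm `O n` on each
matrix space `M_n(X)` satisfying Ruan's axioms (OI) and (OII). -/
structure OSNorm (X : Type u) [AddCommGroup X] [Module ℂ X] where
  O : ∀ n : ℕ, Matrix (Fin n) (Fin n) X → ℝ
  nonneg : ∀ (n : ℕ) (x : Matrix (Fin n) (Fin n) X), 0 ≤ O n x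
  eq_zero_iff : ∀ (n : ℕ) (x : Matrix (Fin n) (Fin n) X), O n x = 0 ↔ x = 0
  add_le : ∀ (n : ℕ) (x y : Matrix (Fin n) (Fin n) X), O n (x + y) ≤ O n x + O n y
  smul_eq : ∀ (n : ℕ) (c : ℂ) (x : Matrix (Fin n) (Fin n) X), O n (c • x) = ‖c‖ * O n x
  cond_OI : ∀ (m n : ℕ) (x : Matrix (Fin m) (Fin m) X) (y : Matrix (Fin n) (Fin n) X),
    O (m + n) (blockDiag x y) = max (O m x) (O n y)
  cond_OII : ∀ (m n : ℕ) (α : Matrix (Fin n) (Fin m) ℂ) (x : Matrix (Fin m) (Fin m) X)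
    (β : Matrix (Fin m) (Fin n) ℂ),
    O n (scalarMulRight (scalarMulLeft α x) β) ≤ matOpNorm α * O m x * matOpNorm β

/-- The completely bounded norm (valued in `[0, ∞]`) of a linear map, with respect to given
matrix norm sequences on the domain and the codomain. -/
def cbNorm {X Y : Type*} (WX : ∀ n : ℕ, Matrix (Fin n) (Fin n) X → ℝ)
    (WY : ∀ n : ℕ, Matrix (Fin n) (Fin n) Y → ℝ) (φ : X → Y) : ℝ≥0∞ :=
  ⨆ (n : ℕ) (x : Matrix (Fin n) (Fin n) X) (_ : WX n x ≤ 1),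
    ENNReal.ofReal (WY n (x.map φ))

/-- The maximal numerical radius norm affiliated with an operator space `(X, 𝒪_n)`. -/
def Wmax {X : Type u} [AddCommGroup X] [Module ℂ X] (OS : OSNorm X)
    (n : ℕ) (x : Matrix (Fin n) (Fin n) X) : ℝ :=
  sInf {t | ∃ (r : ℕ) (a : Matrix (Fin n) (Fin r) ℂ) (y : Matrix (Fin r) (Fin r) X)
      (b : Matrix (Fin r) (Fin n) ℂ),
    x = scalarMulRight (scalarMulLeft a y) b ∧ OS.O r y = 1 ∧
      t = (1 / 2) * matOpNorm (a * aᴴ + bᴴ * b)}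

/-- A complex Hilbert space together with a linear map of `X` into its bounded operators. -/
structure HilbertRep (X : Type u) [AddCommGroup X] [Module ℂ X] where
  H : Type u
  [instN : NormedAddCommGroup H]
  [instI : InnerProductSpace ℂ H]
  [instC : CompleteSpace H]
  Φ : X →ₗ[ℂ] (H →L[ℂ] H)

attribute [instance] HilbertRep.instN HilbertRep.instI HilbertRep.instC

end
/-! ### Auxiliary material for the proof -/

section Aux

open scoped Matrix.Norms.L2Operator

set_option maxHeartbeats 1000000

lemma matOpNorm_eq {m n : ℕ} (α : Matrix (Fin m) (Fin n) ℂ) : matOpNorm α = ‖α‖ := rfl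

lemma matOpNorm_nonneg {m n : ℕ} (α : Matrix (Fin m) (Fin n) ℂ) : 0 ≤ matOpNorm α := by
  rw [matOpNorm_eq]; exact norm_nonneg _

lemma matOpNorm_zero {m n : ℕ} : matOpNorm (0 : Matrix (Fin m) (Fin n) ℂ) = 0 := by
  rw [matOpNorm_eq]; exact norm_zero

lemma matOpNorm_mul_le {m n k : ℕ} (α : Matrix (Fin m) (Fin n) ℂ) (β : Matrix (Fin n) (Fin k) ℂ) :
    matOpNorm (α * β) ≤ matOpNorm α * matOpNorm β := Matrix.l2_opNorm_mul α β

lemma matOpNorm_smul {m n : ℕ} (c : ℂ) (α : Matrix (Fin m) (Fin n) ℂ) :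
    matOpNorm (c • α) = ‖c‖ * matOpNorm α := norm_smul c α

lemma matOpNorm_one_le {n : ℕ} : matOpNorm (1 : Matrix (Fin n) (Fin n) ℂ) ≤ 1 := by
  have h := Matrix.l2_opNorm_conjTranspose_mul_self (1 : Matrix (Fin n) (Fin n) ℂ)
  rw [Matrix.conjTranspose_one, mul_one] at h
  have h0 : (0:ℝ) ≤ ‖(1 : Matrix (Fin n) (Fin n) ℂ)‖ := norm_nonneg _
  rw [matOpNorm_eq]
  nlinarith

lemma toEuclideanLin_mul_apply {p q s : ℕ} (M : Matrix (Fin p) (Fin q) ℂ)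
    (N : Matrix (Fin q) (Fin s) ℂ) (v : EuclideanSpace ℂ (Fin s)) :
    Matrix.toEuclideanLin (M * N) v = Matrix.toEuclideanLin M (Matrix.toEuclideanLin N v) := by
  simp [Matrix.toEuclideanLin_apply, Matrix.mulVec_mulVec]

lemma norm_le_sqrt_S {m r : ℕ} (a : Matrix (Fin m) (Fin r) ℂ) (b : Matrix (Fin r) (Fin m) ℂ) :
    matOpNorm a ≤ Real.sqrt (matOpNorm (a * aᴴ + bᴴ * b)) ∧
      matOpNorm b ≤ Real.sqrt (matOpNorm (a * aᴴ + bᴴ * b)) := by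
  set S := a * aᴴ + bᴴ * b with hS
  have e1 : Matrix.toEuclideanLin aᴴ = LinearMap.adjoint (Matrix.toEuclideanLin a) :=
    Matrix.toEuclideanLin_conjTranspose_eq_adjoint a
  have e2 : Matrix.toEuclideanLin bᴴ = LinearMap.adjoint (Matrix.toEuclideanLin b) :=
    Matrix.toEuclideanLin_conjTranspose_eq_adjoint b
  have key : ∀ ξ : EuclideanSpace ℂ (Fin m),
      ‖Matrix.toEuclideanLin aᴴ ξ‖ ^ 2 + ‖Matrix.toEuclideanLin b ξ‖ ^ 2
        ≤ matOpNorm S * ‖ξ‖ ^ 2 := by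
    intro ξ
    set u := Matrix.toEuclideanLin aᴴ ξ with hu
    set w := Matrix.toEuclideanLin b ξ with hw
    have hinner : (inner ℂ ξ (Matrix.toEuclideanLin S ξ) : ℂ)
        = (‖u‖ ^ 2 + ‖w‖ ^ 2 : ℝ) := by
      have : Matrix.toEuclideanLin S ξ
          = Matrix.toEuclideanLin a u + Matrix.toEuclideanLin bᴴ w := by
        rw [hS, map_add]
        simp only [LinearMap.add_apply, toEuclideanLin_mul_apply, hu, hw]
      rw [this, inner_add_right]
      have h1 : (inner ℂ ξ (Matrix.toEuclideanLin a u) : ℂ) = inner ℂ u u := by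
        rw [← LinearMap.adjoint_inner_left, ← e1]
      have h2 : (inner ℂ ξ (Matrix.toEuclideanLin bᴴ w) : ℂ) = inner ℂ w w := by
        rw [e2, LinearMap.adjoint_inner_right]
      rw [h1, h2, inner_self_eq_norm_sq_to_K, inner_self_eq_norm_sq_to_K]
      norm_cast
    have hre : (‖u‖ ^ 2 + ‖w‖ ^ 2 : ℝ)
        ≤ ‖(inner ℂ ξ (Matrix.toEuclideanLin S ξ) : ℂ)‖ := by
      have h3 := RCLike.re_le_norm (inner ℂ ξ (Matrix.toEuclideanLin S ξ) : ℂ)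
      refine le_trans (le_of_eq ?_) h3
      rw [hinner]
      norm_cast
    have hcs : ‖(inner ℂ ξ (Matrix.toEuclideanLin S ξ) : ℂ)‖
        ≤ ‖ξ‖ * ‖Matrix.toEuclideanLin S ξ‖ := norm_inner_le_norm _ _
    have hop : ‖Matrix.toEuclideanLin S ξ‖ ≤ matOpNorm S * ‖ξ‖ :=
      (LinearMap.toContinuousLinearMap (Matrix.toEuclideanLin S)).le_opNorm ξ
    nlinarith [norm_nonneg ξ, norm_nonneg (Matrix.toEuclideanLin S ξ)]
  have hbound : ∀ {p : ℕ} (M : Matrix (Fin p) (Fin m) ℂ),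
      (∀ ξ : EuclideanSpace ℂ (Fin m), ‖Matrix.toEuclideanLin M ξ‖ ^ 2 ≤ matOpNorm S * ‖ξ‖ ^ 2) →
      matOpNorm M ≤ Real.sqrt (matOpNorm S) := by
    intro p M h
    refine ContinuousLinearMap.opNorm_le_bound _ (Real.sqrt_nonneg _) fun ξ => ?_
    have h2 := h ξ
    have heq : ‖LinearMap.toContinuousLinearMap (Matrix.toEuclideanLin M) ξ‖
        = ‖Matrix.toEuclideanLin M ξ‖ := rfl
    rw [heq]
    have h3 := Real.sqrt_le_sqrt h2
    rwa [Real.sqrt_sq (norm_nonneg _), Real.sqrt_mul (matOpNorm_nonneg S),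
      Real.sqrt_sq (norm_nonneg _)] at h3
  constructor
  · have ha : matOpNorm a = matOpNorm aᴴ := by
      rw [matOpNorm_eq, matOpNorm_eq, Matrix.l2_opNorm_conjTranspose]
    rw [ha]
    refine hbound aᴴ fun ξ => ?_
    have h := key ξ
    nlinarith [sq_nonneg ‖Matrix.toEuclideanLin b ξ‖]
  · refine hbound b fun ξ => ?_
    have h := key ξ
    nlinarith [sq_nonneg ‖Matrix.toEuclideanLin aᴴ ξ‖]

section SM
variable {X : Type*} [AddCommMonoid X] [Module ℂ X] {Y : Type*} [AddCommMonoid Y] [Module ℂ Y]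

lemma scalarMulLeft_one {n k : ℕ} (x : Matrix (Fin n) (Fin k) X) :
    scalarMulLeft 1 x = x := by
  ext i j
  simp [scalarMulLeft, Matrix.one_apply, ite_smul]

lemma scalarMulRight_one {n k : ℕ} (x : Matrix (Fin n) (Fin k) X) :
    scalarMulRight x 1 = x := by
  ext i j
  simp [scalarMulRight, Matrix.one_apply, ite_smul]

lemma scalarMulLeft_zero {m n k : ℕ} (α : Matrix (Fin m) (Fin n) ℂ) :
    scalarMulLeft α (0 : Matrix (Fin n) (Fin k) X) = 0 := by
  ext i j
  simp [scalarMulLeft]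

lemma scalarMulRight_zero {m n k : ℕ} (β : Matrix (Fin n) (Fin k) ℂ) :
    scalarMulRight (0 : Matrix (Fin m) (Fin n) X) β = 0 := by
  ext i j
  simp [scalarMulRight]

lemma scalarMulLeft_mul {m n p k : ℕ} (α : Matrix (Fin m) (Fin n) ℂ)
    (β : Matrix (Fin n) (Fin p) ℂ) (x : Matrix (Fin p) (Fin k) X) :
    scalarMulLeft (α * β) x = scalarMulLeft α (scalarMulLeft β x) := by
  ext i j
  simp only [scalarMulLeft, Matrix.of_apply, Matrix.mul_apply, Finset.sum_smul, Finset.smul_sum,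
    smul_smul]
  rw [Finset.sum_comm]

lemma scalarMulRight_mul {m n p k : ℕ} (x : Matrix (Fin m) (Fin n) X)
    (β : Matrix (Fin n) (Fin p) ℂ) (γ : Matrix (Fin p) (Fin k) ℂ) :
    scalarMulRight x (β * γ) = scalarMulRight (scalarMulRight x β) γ := by
  ext i j
  simp only [scalarMulRight, Matrix.of_apply, Matrix.mul_apply, Finset.sum_smul, Finset.smul_sum,
    smul_smul]
  rw [Finset.sum_comm]
  exact Finset.sum_congr rfl fun l _ => Finset.sum_congr rfl fun l' _ => by rw [mul_comm]

lemma scalarMulLeft_right_comm {m n p k : ℕ} (α : Matrix (Fin m) (Fin n) ℂ)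
    (x : Matrix (Fin n) (Fin p) X) (β : Matrix (Fin p) (Fin k) ℂ) :
    scalarMulLeft α (scalarMulRight x β) = scalarMulRight (scalarMulLeft α x) β := by
  ext i j
  simp only [scalarMulLeft, scalarMulRight, Matrix.of_apply, Finset.smul_sum, smul_smul]
  rw [Finset.sum_comm]
  exact Finset.sum_congr rfl fun l _ => Finset.sum_congr rfl fun l' _ => by rw [mul_comm]

lemma scalarMulLeft_smul_mat {m n k : ℕ} (c : ℂ) (α : Matrix (Fin m) (Fin n) ℂ)
    (x : Matrix (Fin n) (Fin k) X) :
    scalarMulLeft (c • α) x = c • scalarMulLeft α x := by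
  ext i j
  simp [scalarMulLeft, Finset.smul_sum, smul_smul]

lemma scalarMulLeft_smul {m n k : ℕ} (c : ℂ) (α : Matrix (Fin m) (Fin n) ℂ)
    (x : Matrix (Fin n) (Fin k) X) :
    scalarMulLeft α (c • x) = c • scalarMulLeft α x := by
  ext i j
  simp [scalarMulLeft, Finset.smul_sum, smul_smul, mul_comm]

lemma scalarMulRight_smul_mat {m n k : ℕ} (c : ℂ) (x : Matrix (Fin m) (Fin n) X)
    (β : Matrix (Fin n) (Fin k) ℂ) :
    scalarMulRight x (c • β) = c • scalarMulRight x β := by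
  ext i j
  simp [scalarMulRight, Finset.smul_sum, smul_smul]

lemma scalarMulRight_smul {m n k : ℕ} (c : ℂ) (x : Matrix (Fin m) (Fin n) X)
    (β : Matrix (Fin n) (Fin k) ℂ) :
    scalarMulRight (c • x) β = c • scalarMulRight x β := by
  ext i j
  simp [scalarMulRight, Finset.smul_sum, smul_smul, mul_comm]

end SM

section SMmap
variable {X : Type*} [AddCommGroup X] [Module ℂ X] {Y : Type*} [AddCommGroup Y] [Module ℂ Y]

lemma scalarMulLeft_map {m n k : ℕ} (φ : X →ₗ[ℂ] Y) (α : Matrix (Fin m) (Fin n) ℂ)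
    (x : Matrix (Fin n) (Fin k) X) :
    (scalarMulLeft α x).map φ = scalarMulLeft α (x.map φ) := by
  ext i j
  simp [scalarMulLeft, Matrix.map_apply, map_sum, map_smul]

lemma scalarMulRight_map {m n k : ℕ} (φ : X →ₗ[ℂ] Y) (x : Matrix (Fin m) (Fin n) X)
    (β : Matrix (Fin n) (Fin k) ℂ) :
    (scalarMulRight x β).map φ = scalarMulRight (x.map φ) β := by
  ext i j
  simp [scalarMulRight, Matrix.map_apply, map_sum, map_smul]

lemma smul_matrix_map {m k : ℕ} (φ : X →ₗ[ℂ] Y) (c : ℂ) (x : Matrix (Fin m) (Fin k) X) :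
    ((c • x).map φ) = c • (x.map φ) := by
  ext i j
  simp [Matrix.map_apply, map_smul]

lemma zero_matrix_map {m k : ℕ} (φ : X →ₗ[ℂ] Y) :
    ((0 : Matrix (Fin m) (Fin k) X).map φ) = 0 := by
  ext i j
  simp [Matrix.map_apply]

end SMmap

end Aux

section Corner

open scoped Matrix.Norms.L2Operator

set_option maxHeartbeats 1000000

/-- The isometric inclusion of `ℂⁿ` as the first summand of `ℂ^{n+n}`. -/
def inj1 (n : ℕ) : Matrix (Fin (n + n)) (Fin n) ℂ :=
  Matrix.of fun i j => if finSumFinEquiv.symm i = Sum.inl j then 1 else 0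

/-- The isometric inclusion of `ℂⁿ` as the second summand of `ℂ^{n+n}`. -/
def inj2 (n : ℕ) : Matrix (Fin (n + n)) (Fin n) ℂ :=
  Matrix.of fun i j => if finSumFinEquiv.symm i = Sum.inr j then 1 else 0

/-- The projection of `ℂ^{n+n}` onto the first summand. -/
def proj1 (n : ℕ) : Matrix (Fin n) (Fin (n + n)) ℂ :=
  Matrix.of fun i j => if finSumFinEquiv.symm j = Sum.inl i then 1 else 0

/-- The projection of `ℂ^{n+n}` onto the second summand. -/
def proj2 (n : ℕ) : Matrix (Fin n) (Fin (n + n)) ℂ :=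
  Matrix.of fun i j => if finSumFinEquiv.symm j = Sum.inr i then 1 else 0

lemma inj1_conjT (n : ℕ) : (inj1 n)ᴴ = proj1 n := by
  ext i j
  simp [inj1, proj1, Matrix.conjTranspose_apply, apply_ite star]

lemma proj2_conjT (n : ℕ) : (proj2 n)ᴴ = inj2 n := by
  ext i j
  simp [inj2, proj2, Matrix.conjTranspose_apply, apply_ite star]

lemma proj1_mul_inj1 (n : ℕ) : proj1 n * inj1 n = 1 := by
  ext i j
  rw [Matrix.mul_apply, ← Equiv.sum_comp (finSumFinEquiv (m := n) (n := n))]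
  simp [proj1, inj1, Fintype.sum_sum_type, Matrix.one_apply, eq_comm]

lemma proj2_mul_inj2 (n : ℕ) : proj2 n * inj2 n = 1 := by
  ext i j
  rw [Matrix.mul_apply, ← Equiv.sum_comp (finSumFinEquiv (m := n) (n := n))]
  simp [proj2, inj2, Fintype.sum_sum_type, Matrix.one_apply, eq_comm]

lemma inj_proj_sum (n : ℕ) : inj1 n * proj1 n + inj2 n * proj2 n = 1 := by
  ext i j
  have hij : (i = j) ↔ (finSumFinEquiv.symm i = finSumFinEquiv.symm j) :=
    ⟨fun h => by rw [h], fun h => finSumFinEquiv.symm.injective h⟩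
  rcases h1 : finSumFinEquiv.symm i with i' | i' <;>
    rcases h2 : finSumFinEquiv.symm j with j' | j' <;>
    simp [Matrix.add_apply, Matrix.mul_apply, inj1, inj2, proj1, proj2, h1, h2,
      Matrix.one_apply, hij, Finset.sum_ite_eq, Finset.sum_ite_eq']

end Corner

section WmaxLemmas

set_option maxHeartbeats 1000000

variable {X : Type u} [AddCommGroup X] [Module ℂ X] (OS : OSNorm X)

lemma OSNorm.O_zero (n : ℕ) : OS.O n (0 : Matrix (Fin n) (Fin n) X) = 0 :=
  (OS.eq_zero_iff n 0).mpr rfl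

lemma OSNorm.O_pos {n : ℕ} {x : Matrix (Fin n) (Fin n) X} (hx : x ≠ 0) : 0 < OS.O n x :=
  lt_of_le_of_ne (OS.nonneg n x) fun h => hx ((OS.eq_zero_iff n x).mp h.symm)

lemma Wmax_bddBelow (n : ℕ) (x : Matrix (Fin n) (Fin n) X) :
    BddBelow {t | ∃ (r : ℕ) (a : Matrix (Fin n) (Fin r) ℂ) (y : Matrix (Fin r) (Fin r) X)
      (b : Matrix (Fin r) (Fin n) ℂ),
      x = scalarMulRight (scalarMulLeft a y) b ∧ OS.O r y = 1 ∧
        t = (1 / 2) * matOpNorm (a * aᴴ + bᴴ * b)} := by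
  refine ⟨0, fun t ht => ?_⟩
  obtain ⟨r, a, y, b, -, -, rfl⟩ := ht
  have := matOpNorm_nonneg (a * aᴴ + bᴴ * b)
  linarith

lemma Wmax_nonneg (n : ℕ) (x : Matrix (Fin n) (Fin n) X) : 0 ≤ Wmax OS n x := by
  refine Real.sInf_nonneg fun t ht => ?_
  obtain ⟨r, a, y, b, -, -, rfl⟩ := ht
  have := matOpNorm_nonneg (a * aᴴ + bᴴ * b)
  linarith

lemma Wmax_le {n r : ℕ} {x : Matrix (Fin n) (Fin n) X} {a : Matrix (Fin n) (Fin r) ℂ}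
    {y : Matrix (Fin r) (Fin r) X} {b : Matrix (Fin r) (Fin n) ℂ}
    (hfac : x = scalarMulRight (scalarMulLeft a y) b) (hy : OS.O r y = 1) :
    Wmax OS n x ≤ (1 / 2) * matOpNorm (a * aᴴ + bᴴ * b) :=
  csInf_le (Wmax_bddBelow OS n x) ⟨r, a, y, b, hfac, hy, rfl⟩

/-- The standard factorization of a nonzero `x` through `x / O(x)`. -/
lemma std_factor {n : ℕ} {x : Matrix (Fin n) (Fin n) X} (hx : x ≠ 0) :
    ∃ (a : Matrix (Fin n) (Fin n) ℂ) (y : Matrix (Fin n) (Fin n) X) (b : Matrix (Fin n) (Fin n) ℂ),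
      x = scalarMulRight (scalarMulLeft a y) b ∧ OS.O n y = 1 ∧
        (1 / 2) * matOpNorm (a * aᴴ + bᴴ * b) ≤ OS.O n x := by
  set O := OS.O n x with hO
  have hOpos : 0 < O := OS.O_pos hx
  set c : ℝ := Real.sqrt O with hc
  have hcc : (c : ℂ) * (c : ℂ) = (O : ℂ) := by
    rw [← Complex.ofReal_mul, Real.mul_self_sqrt hOpos.le]
  refine ⟨(c : ℂ) • 1, ((O : ℂ))⁻¹ • x, (c : ℂ) • 1, ?_, ?_, ?_⟩
  · rw [scalarMulLeft_smul_mat, scalarMulLeft_smul, scalarMulLeft_one, scalarMulRight_smul_mat,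
      scalarMulRight_smul, scalarMulRight_smul, scalarMulRight_one, smul_smul, smul_smul]
    rw [show (c : ℂ) * (c : ℂ) * ((O : ℝ) : ℂ)⁻¹ = 1 by
      rw [hcc]; field_simp]
    rw [one_smul]
  · rw [OS.smul_eq]
    rw [norm_inv, Complex.norm_real, Real.norm_eq_abs, abs_of_pos hOpos, ← hO,
      inv_mul_cancel₀ hOpos.ne']
  · have h1 : ((c : ℂ) • (1 : Matrix (Fin n) (Fin n) ℂ)) * ((c : ℂ) • 1)ᴴ
        + ((c : ℂ) • 1)ᴴ * ((c : ℂ) • 1) = ((2 * O : ℝ) : ℂ) • 1 := by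
      rw [Matrix.conjTranspose_smul, Matrix.conjTranspose_one]
      rw [show star ((c : ℂ)) = (c : ℂ) by simp [Complex.star_def, Complex.conj_ofReal]]
      rw [Matrix.smul_mul, Matrix.mul_smul, smul_smul, hcc, one_mul]
      rw [← add_smul]
      congr 1
      push_cast
      ring
    rw [h1, matOpNorm_smul]
    have h2 : ‖((2 * O : ℝ) : ℂ)‖ = 2 * O := by
      rw [Complex.norm_real, Real.norm_eq_abs, abs_of_pos (by linarith)]
    rw [h2]
    have := matOpNorm_one_le (n := n)
    nlinarith

lemma Wmax_set_nonempty {n : ℕ} {x : Matrix (Fin n) (Fin n) X} (hx : x ≠ 0) :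
    Set.Nonempty {t | ∃ (r : ℕ) (a : Matrix (Fin n) (Fin r) ℂ) (y : Matrix (Fin r) (Fin r) X)
      (b : Matrix (Fin r) (Fin n) ℂ),
      x = scalarMulRight (scalarMulLeft a y) b ∧ OS.O r y = 1 ∧
        t = (1 / 2) * matOpNorm (a * aᴴ + bᴴ * b)} := by
  obtain ⟨a, y, b, hfac, hy, -⟩ := std_factor OS hx
  exact ⟨_, n, a, y, b, hfac, hy, rfl⟩

lemma Wmax_le_O {n : ℕ} {x : Matrix (Fin n) (Fin n) X} (hx : x ≠ 0) :
    Wmax OS n x ≤ OS.O n x := by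
  obtain ⟨a, y, b, hfac, hy, hle⟩ := std_factor OS hx
  exact le_trans (Wmax_le OS hfac hy) hle

lemma Wmax_zero (n : ℕ) : Wmax OS n (0 : Matrix (Fin n) (Fin n) X) = 0 := by
  refine le_antisymm ?_ (Wmax_nonneg OS n 0)
  by_cases h : Set.Nonempty {t | ∃ (r : ℕ) (a : Matrix (Fin n) (Fin r) ℂ)
      (y : Matrix (Fin r) (Fin r) X) (b : Matrix (Fin r) (Fin n) ℂ),
      (0 : Matrix (Fin n) (Fin n) X) = scalarMulRight (scalarMulLeft a y) b ∧ OS.O r y = 1 ∧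
        t = (1 / 2) * matOpNorm (a * aᴴ + bᴴ * b)}
  · obtain ⟨t, r, a, y, b, -, hy, -⟩ := h
    have hfac : (0 : Matrix (Fin n) (Fin n) X)
        = scalarMulRight (scalarMulLeft (0 : Matrix (Fin n) (Fin r) ℂ) y) 0 := by
      rw [show scalarMulLeft (0 : Matrix (Fin n) (Fin r) ℂ) y = 0 by
        ext i j; simp [scalarMulLeft], scalarMulRight_zero]
    have := Wmax_le OS hfac hy
    simpa [matOpNorm_zero] using this
  · rw [Set.not_nonempty_iff_eq_empty] at h
    rw [Wmax, h, Real.sInf_empty]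

lemma Wmax_exists_lt {n : ℕ} {x : Matrix (Fin n) (Fin n) X} (hx : x ≠ 0) {ε : ℝ} (hε : 0 < ε) :
    ∃ (r : ℕ) (a : Matrix (Fin n) (Fin r) ℂ) (y : Matrix (Fin r) (Fin r) X)
      (b : Matrix (Fin r) (Fin n) ℂ),
      x = scalarMulRight (scalarMulLeft a y) b ∧ OS.O r y = 1 ∧
        (1 / 2) * matOpNorm (a * aᴴ + bᴴ * b) < Wmax OS n x + ε := by
  have hlt : Wmax OS n x < Wmax OS n x + ε := by linarith
  obtain ⟨t, ht, htlt⟩ := exists_lt_of_csInf_lt (Wmax_set_nonempty OS hx) hlt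
  obtain ⟨r, a, y, b, hfac, hy, rfl⟩ := ht
  exact ⟨r, a, y, b, hfac, hy, htlt⟩

end WmaxLemmas

section CornerBlockLemmas

set_option maxHeartbeats 1000000

variable {X : Type u} [AddCommGroup X] [Module ℂ X]
variable {Z : Type v} [AddCommGroup Z] [Module ℂ Z]

lemma cornerBlock_map {n : ℕ} (φ : X →ₗ[ℂ] Z) (x : Matrix (Fin n) (Fin n) X) :
    (cornerBlock x).map φ = cornerBlock (x.map φ) := by
  ext i j
  rcases h1 : finSumFinEquiv.symm i with i' | i' <;>
    rcases h2 : finSumFinEquiv.symm j with j' | j' <;>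
    simp [cornerBlock, Matrix.submatrix_apply, Matrix.map_apply, h1, h2]

lemma scalarMul_extract {n : ℕ} (w : Matrix (Fin (n + n)) (Fin (n + n)) X) :
    scalarMulRight (scalarMulLeft (proj1 n) w) (inj2 n)
      = Matrix.of fun i j => w (finSumFinEquiv (Sum.inl i)) (finSumFinEquiv (Sum.inr j)) := by
  ext i j
  simp only [scalarMulLeft, scalarMulRight, proj1, inj2, Matrix.of_apply]
  simp only [Equiv.symm_apply_eq, ite_smul, one_smul, zero_smul]
  simp [Finset.sum_ite_eq']
  rw [Finset.sum_eq_single (Fin.castAdd n i)] <;> intros <;> simp_all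

lemma corner_fac {n : ℕ} (x : Matrix (Fin n) (Fin n) X) :
    scalarMulRight (scalarMulLeft (inj1 n) x) (proj2 n) = cornerBlock x := by
  ext i j
  simp only [scalarMulLeft, scalarMulRight, inj1, proj2, Matrix.of_apply, cornerBlock,
    Matrix.submatrix_apply]
  rcases h1 : finSumFinEquiv.symm i with i' | i' <;>
    rcases h2 : finSumFinEquiv.symm j with j' | j' <;>
    simp [h1, h2, ite_smul, one_smul, zero_smul, Finset.sum_ite_eq, Finset.sum_ite_eq']

lemma proj1_conjT (n : ℕ) : (proj1 n)ᴴ = inj1 n := by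
  rw [← inj1_conjT, Matrix.conjTranspose_conjTranspose]

lemma inj2_conjT (n : ℕ) : (inj2 n)ᴴ = proj2 n := by
  rw [← proj2_conjT, Matrix.conjTranspose_conjTranspose]

lemma proj1_norm_le (n : ℕ) : matOpNorm (proj1 n) ≤ 1 := by
  have h := (norm_le_sqrt_S (proj1 n) (0 : Matrix (Fin (n + n)) (Fin n) ℂ)).1
  rw [proj1_conjT, proj1_mul_inj1, Matrix.conjTranspose_zero, Matrix.mul_zero, add_zero] at h
  calc matOpNorm (proj1 n) ≤ Real.sqrt (matOpNorm 1) := h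
    _ ≤ Real.sqrt 1 := Real.sqrt_le_sqrt matOpNorm_one_le
    _ = 1 := Real.sqrt_one

lemma inj2_norm_le (n : ℕ) : matOpNorm (inj2 n) ≤ 1 := by
  have h := (norm_le_sqrt_S (0 : Matrix (Fin n) (Fin (n + n)) ℂ) (inj2 n)).2
  rw [inj2_conjT, proj2_mul_inj2, Matrix.conjTranspose_zero, Matrix.zero_mul, zero_add] at h
  calc matOpNorm (inj2 n) ≤ Real.sqrt (matOpNorm 1) := h
    _ ≤ Real.sqrt 1 := Real.sqrt_le_sqrt matOpNorm_one_le
    _ = 1 := Real.sqrt_one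

lemma corner_upper (OS : OSNorm X) {n : ℕ} {x : Matrix (Fin n) (Fin n) X} (hx : x ≠ 0) :
    Wmax OS (n + n) ((2 : ℂ) • cornerBlock x) ≤ OS.O n x := by
  set O := OS.O n x with hO
  have hOpos : 0 < O := OS.O_pos hx
  set c : ℝ := Real.sqrt (2 * O) with hc
  have hcc : (c : ℂ) * (c : ℂ) = ((2 * O : ℝ) : ℂ) := by
    rw [← Complex.ofReal_mul, Real.mul_self_sqrt (by linarith)]
  have hy : OS.O n (((O : ℝ) : ℂ)⁻¹ • x) = 1 := by
    rw [OS.smul_eq, norm_inv, Complex.norm_real, Real.norm_eq_abs, abs_of_pos hOpos, ← hO,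
      inv_mul_cancel₀ hOpos.ne']
  have hfac : scalarMulRight (scalarMulLeft ((c : ℂ) • inj1 n) (((O : ℝ) : ℂ)⁻¹ • x))
      ((c : ℂ) • proj2 n) = (2 : ℂ) • cornerBlock x := by
    rw [scalarMulLeft_smul_mat, scalarMulLeft_smul, scalarMulRight_smul_mat,
      scalarMulRight_smul, scalarMulRight_smul, corner_fac, smul_smul, smul_smul]
    congr 1
    have hO0 : ((O : ℝ) : ℂ) ≠ 0 := Complex.ofReal_ne_zero.mpr hOpos.ne'
    rw [hcc]
    push_cast
    field_simp
  have hS : ((c : ℂ) • inj1 n) * ((c : ℂ) • inj1 n)ᴴ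
      + ((c : ℂ) • proj2 n)ᴴ * ((c : ℂ) • proj2 n) = ((2 * O : ℝ) : ℂ) • 1 := by
    rw [Matrix.conjTranspose_smul, Matrix.conjTranspose_smul, inj1_conjT, proj2_conjT]
    rw [show star ((c : ℂ)) = (c : ℂ) by simp [Complex.star_def, Complex.conj_ofReal]]
    rw [Matrix.smul_mul, Matrix.mul_smul, smul_smul, hcc]
    rw [Matrix.smul_mul, Matrix.mul_smul, smul_smul, hcc]
    rw [← smul_add, inj_proj_sum]
  have hW := Wmax_le OS hfac.symm hy
  rw [hS, matOpNorm_smul] at hW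
  have h2 : ‖((2 * O : ℝ) : ℂ)‖ = 2 * O := by
    rw [Complex.norm_real, Real.norm_eq_abs, abs_of_pos (by linarith)]
  rw [h2] at hW
  have h1le := matOpNorm_one_le (n := n + n)
  have h1nn := matOpNorm_nonneg (1 : Matrix (Fin (n + n)) (Fin (n + n)) ℂ)
  nlinarith

lemma corner_lower (OS : OSNorm X) {n : ℕ} (x : Matrix (Fin n) (Fin n) X) :
    OS.O n x ≤ Wmax OS (n + n) ((2 : ℂ) • cornerBlock x) := by
  by_cases hx : x = 0
  · subst hx
    rw [OS.O_zero]
    exact Wmax_nonneg OS _ _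
  · have hne : (2 : ℂ) • cornerBlock x ≠ 0 := by
      intro h
      apply hx
      ext i j
      have h3 := congrFun (congrFun h (finSumFinEquiv (Sum.inl i))) (finSumFinEquiv (Sum.inr j))
      simp only [cornerBlock, Matrix.smul_apply, Matrix.submatrix_apply,
        Equiv.symm_apply_apply, Matrix.fromBlocks_apply₁₂, Matrix.zero_apply] at h3
      have h4 : (2 : ℂ) ≠ 0 := two_ne_zero
      rcases smul_eq_zero.mp h3 with h5 | h5
      · exact absurd h5 h4
      · simpa using h5
    refine le_csInf (Wmax_set_nonempty OS hne) ?_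
    rintro t ⟨r, a, y, b, hfac, hy, rfl⟩
    set S := a * aᴴ + bᴴ * b with hSdef
    have h1 : scalarMulRight (scalarMulLeft (proj1 n) ((2 : ℂ) • cornerBlock x)) (inj2 n)
        = (2 : ℂ) • x := by
      rw [scalarMul_extract]
      ext i j
      simp only [Matrix.of_apply, Matrix.smul_apply, cornerBlock, Matrix.submatrix_apply,
        Equiv.symm_apply_apply, Matrix.fromBlocks_apply₁₂]
    have hx2 : (2 : ℂ) • x = scalarMulRight (scalarMulLeft (proj1 n * a) y) (b * inj2 n) := by
      calc (2 : ℂ) • x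
          = scalarMulRight (scalarMulLeft (proj1 n) ((2 : ℂ) • cornerBlock x)) (inj2 n) :=
            h1.symm
        _ = scalarMulRight (scalarMulLeft (proj1 n * a) y) (b * inj2 n) := by
            rw [hfac, scalarMulLeft_right_comm, ← scalarMulLeft_mul, ← scalarMulRight_mul]
    have hOII := OS.cond_OII r n (proj1 n * a) y (b * inj2 n)
    rw [← hx2, hy, mul_one] at hOII
    have hsm : OS.O n ((2 : ℂ) • x) = 2 * OS.O n x := by
      rw [OS.smul_eq]
      norm_num
    rw [hsm] at hOII
    obtain ⟨hA, hB⟩ := norm_le_sqrt_S a b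
    have h5 : matOpNorm (proj1 n * a) ≤ Real.sqrt (matOpNorm S) := by
      refine le_trans (matOpNorm_mul_le _ _) ?_
      calc matOpNorm (proj1 n) * matOpNorm a ≤ 1 * Real.sqrt (matOpNorm S) :=
            mul_le_mul (proj1_norm_le n) hA (matOpNorm_nonneg a) one_pos.le
        _ = Real.sqrt (matOpNorm S) := one_mul _
    have h6 : matOpNorm (b * inj2 n) ≤ Real.sqrt (matOpNorm S) := by
      refine le_trans (matOpNorm_mul_le _ _) ?_
      calc matOpNorm b * matOpNorm (inj2 n) ≤ Real.sqrt (matOpNorm S) * 1 :=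
            mul_le_mul hB (inj2_norm_le n) (matOpNorm_nonneg _) (Real.sqrt_nonneg _)
        _ = Real.sqrt (matOpNorm S) := mul_one _
    have h7 : matOpNorm (proj1 n * a) * matOpNorm (b * inj2 n)
        ≤ Real.sqrt (matOpNorm S) * Real.sqrt (matOpNorm S) :=
      mul_le_mul h5 h6 (matOpNorm_nonneg _) (Real.sqrt_nonneg _)
    rw [Real.mul_self_sqrt (matOpNorm_nonneg S)] at h7
    linarith

end CornerBlockLemmas

set_option maxHeartbeats 1600000 in
/-- Theorem 3.9 (1): `𝒲(φ : 𝒲_max(X) → 𝒲_max(Y))_cb = 𝒪(φ)_cb` in `[0, ∞]`. -/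
theorem stmt_18 {X : Type u} {Y : Type v} [AddCommGroup X] [Module ℂ X]
    [AddCommGroup Y] [Module ℂ Y] (OS : OSNorm X) (OS' : OSNorm Y) (φ : X →ₗ[ℂ] Y) :
    cbNorm (Wmax OS) (Wmax OS') ⇑φ = cbNorm OS.O OS'.O ⇑φ := by
  apply le_antisymm
  · -- `𝒲(φ)_cb ≤ 𝒪(φ)_cb`
    refine iSup_le fun n => iSup_le fun x => iSup_le fun hx => ?_
    by_cases hx0 : x = 0
    · subst hx0
      rw [zero_matrix_map, Wmax_zero]
      simp
    · by_cases hC : cbNorm OS.O OS'.O ⇑φ = ⊤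
      · rw [hC]; exact le_top
      set C := (cbNorm OS.O OS'.O ⇑φ).toReal with hCdef
      have hC0 : 0 ≤ C := ENNReal.toReal_nonneg
      have hyC : ∀ (r : ℕ) (y : Matrix (Fin r) (Fin r) X), OS.O r y ≤ 1 →
          OS'.O r (y.map ⇑φ) ≤ C := by
        intro r y hy
        have h1 : ENNReal.ofReal (OS'.O r (y.map ⇑φ)) ≤ cbNorm OS.O OS'.O ⇑φ := by
          refine le_iSup_of_le r (le_iSup_of_le y ?_)
          exact le_iSup_of_le hy le_rfl
        have h2 := ENNReal.toReal_mono hC h1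
        rwa [ENNReal.toReal_ofReal (OS'.nonneg _ _)] at h2
      have main : Wmax OS' n (x.map ⇑φ) ≤ C := by
        by_cases h0 : x.map ⇑φ = 0
        · rw [h0, Wmax_zero]
          exact hC0
        · have key : ∀ δ : ℝ, 0 < δ → Wmax OS' n (x.map ⇑φ) ≤ C * (Wmax OS n x + δ) := by
            intro δ hδ
            obtain ⟨r, a, y, b, hfac, hy, hlt⟩ := Wmax_exists_lt OS hx0 hδ
            set c := OS'.O r (y.map ⇑φ) with hcdef
            have hcC : c ≤ C := hyC r y (le_of_eq hy)
            have hc0 : c ≠ 0 := by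
              intro h
              apply h0
              have hy0 : y.map ⇑φ = 0 := (OS'.eq_zero_iff r _).mp h
              rw [hfac, scalarMulRight_map, scalarMulLeft_map, hy0, scalarMulLeft_zero,
                scalarMulRight_zero]
            have hcpos : 0 < c := lt_of_le_of_ne (OS'.nonneg _ _) (Ne.symm hc0)
            have hccne : ((c : ℝ) : ℂ) ≠ 0 := Complex.ofReal_ne_zero.mpr hc0
            set d : ℝ := Real.sqrt c with hd
            have hdd : (d : ℂ) * (d : ℂ) = ((c : ℝ) : ℂ) := by
              rw [← Complex.ofReal_mul, Real.mul_self_sqrt hcpos.le]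
            have hy' : OS'.O r (((c : ℝ) : ℂ)⁻¹ • (y.map ⇑φ)) = 1 := by
              rw [OS'.smul_eq, norm_inv, Complex.norm_real, Real.norm_eq_abs,
                abs_of_pos hcpos, ← hcdef, inv_mul_cancel₀ hcpos.ne']
            have hfac' : scalarMulRight (scalarMulLeft ((d : ℂ) • a)
                (((c : ℝ) : ℂ)⁻¹ • (y.map ⇑φ))) ((d : ℂ) • b) = x.map ⇑φ := by
              rw [scalarMulLeft_smul_mat, scalarMulLeft_smul, scalarMulRight_smul_mat,
                scalarMulRight_smul, scalarMulRight_smul, smul_smul, smul_smul]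
              rw [hfac, scalarMulRight_map, scalarMulLeft_map]
              rw [show (d : ℂ) * (d : ℂ) * ((c : ℝ) : ℂ)⁻¹ = (1 : ℂ) by
                rw [hdd, mul_inv_cancel₀ hccne]]
              rw [one_smul]
            have hS' : ((d : ℂ) • a) * ((d : ℂ) • a)ᴴ + ((d : ℂ) • b)ᴴ * ((d : ℂ) • b)
                = ((c : ℝ) : ℂ) • (a * aᴴ + bᴴ * b) := by
              rw [Matrix.conjTranspose_smul, Matrix.conjTranspose_smul]
              rw [show star ((d : ℂ)) = (d : ℂ) by simp [Complex.star_def, Complex.conj_ofReal]]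
              rw [Matrix.smul_mul, Matrix.mul_smul, smul_smul, hdd]
              rw [Matrix.smul_mul, Matrix.mul_smul, smul_smul, hdd]
              rw [← smul_add]
            have hW := Wmax_le OS' hfac'.symm hy'
            rw [hS', matOpNorm_smul] at hW
            have hnc : ‖((c : ℝ) : ℂ)‖ = c := by
              rw [Complex.norm_real, Real.norm_eq_abs, abs_of_pos hcpos]
            rw [hnc] at hW
            have ht0 : 0 ≤ (1 / 2) * matOpNorm (a * aᴴ + bᴴ * b) := by
              have := matOpNorm_nonneg (a * aᴴ + bᴴ * b)
              linarith
            calc Wmax OS' n (x.map ⇑φ) ≤ 1 / 2 * (c * matOpNorm (a * aᴴ + bᴴ * b)) := hW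
              _ = c * (1 / 2 * matOpNorm (a * aᴴ + bᴴ * b)) := by ring
              _ ≤ C * (Wmax OS n x + δ) := mul_le_mul hcC hlt.le ht0 hC0
          refine le_of_forall_pos_le_add fun ε hε => ?_
          rcases eq_or_lt_of_le hC0 with hCz | hCpos
          · have h := key 1 one_pos
            rw [← hCz, zero_mul] at h
            linarith
          · have h := key (ε / C) (div_pos hε hCpos)
            have h2 : C * (Wmax OS n x + ε / C) ≤ C * (1 + ε / C) :=
              mul_le_mul_of_nonneg_left (by linarith) hC0
            have h3 : C * (1 + ε / C) = C + ε := by field_simp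
            linarith
      calc ENNReal.ofReal (Wmax OS' n (x.map ⇑φ)) ≤ ENNReal.ofReal C :=
            ENNReal.ofReal_le_ofReal main
        _ = cbNorm OS.O OS'.O ⇑φ := ENNReal.ofReal_toReal hC
  · -- `𝒪(φ)_cb ≤ 𝒲(φ)_cb`
    refine iSup_le fun n => iSup_le fun x => iSup_le fun hx => ?_
    by_cases hx0 : x = 0
    · subst hx0
      rw [zero_matrix_map, OSNorm.O_zero]
      simp
    · have h1 := corner_lower OS' (x.map ⇑φ)
      have h2 : Wmax OS (n + n) ((2 : ℂ) • cornerBlock x) ≤ 1 :=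
        le_trans (corner_upper OS hx0) hx
      have h3 : ((2 : ℂ) • cornerBlock x).map ⇑φ = (2 : ℂ) • cornerBlock (x.map ⇑φ) := by
        rw [smul_matrix_map, cornerBlock_map]
      calc ENNReal.ofReal (OS'.O n (x.map ⇑φ))
          ≤ ENNReal.ofReal (Wmax OS' (n + n) (((2 : ℂ) • cornerBlock x).map ⇑φ)) := by
            rw [h3]; exact ENNReal.ofReal_le_ofReal h1
        _ ≤ cbNorm (Wmax OS) (Wmax OS') ⇑φ := by
            refine le_iSup_of_le (n + n) (le_iSup_of_le ((2 : ℂ) • cornerBlock x) ?_)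
            exact le_iSup_of_le h2 le_rfl
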